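/- Consider a sequential process over timesteps t = 1, 2, …, with a default arm of known reward μ0 > 0 and parameter α ∈ (0,1). At each timestep t, the algorithm plays a regular arm (receiving some reward r_t ≥ 0) only if r_S(t−1) + N0(t−1)·μ0 ≥ (1−α)·μ0·t, where r_S(t−1) is the cumulative reward from regular arms and N0(t−1) the number of default-arm pulls up to time t−1; otherwise it plays the default arm, receiving μ0. Then for every t ≥ 1, the total received reward satisfies Σ_{s=1}^t r_{s,x_s} ≥ (1−α)·μ0·t. -/

import Mathlib

theorem stmt_6 (μ0 α : ℝ) (hμ0 : 0 < μ0) (hα : α ∈ Set.Ioo (0 : ℝ) 1)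
    (reward : ℕ → ℝ) (regular : ℕ → Bool)
    (rS : ℕ → ℝ) (N0 : ℕ → ℕ)
    (hrS : ∀ t, rS t = ∑ s ∈ (Finset.Icc 1 t).filter (fun s => regular s = true), reward s)
    (hN0 : ∀ t, N0 t = ((Finset.Icc 1 t).filter (fun s => regular s = false)).card)
    (hgate : ∀ t, 1 ≤ t → regular t = true →
      rS (t - 1) + (N0 (t - 1) : ℝ) * μ0 ≥ (1 - α) * μ0 * t)
    (hpos : ∀ t, regular t = true → 0 ≤ reward t)
    (hdef : ∀ t, regular t = false → reward t = μ0)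
    (t : ℕ) (ht : 1 ≤ t) :
    ∑ s ∈ Finset.Icc 1 t, reward s ≥ (1 - α) * μ0 * t := by
  obtain ⟨hα0, hα1⟩ := hα
  -- key: total sum equals rS t + N0 t * μ0
  have hsum : ∀ u, ∑ s ∈ Finset.Icc 1 u, reward s = rS u + (N0 u : ℝ) * μ0 := by
    intro u
    rw [hrS, hN0]
    have hfilter : (Finset.Icc 1 u).filter (fun s => regular s = false)
        = (Finset.Icc 1 u).filter (fun s => ¬ regular s = true) := by
      apply Finset.filter_congr
      intro s _
      simp
    rw [← Finset.sum_filter_add_sum_filter_not (Finset.Icc 1 u)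
      (fun s => regular s = true) reward, hfilter]
    congr 1
    rw [Finset.sum_congr rfl (fun s hs => hdef s (by
      simpa using (Finset.mem_filter.mp hs).2))]
    rw [Finset.sum_const, nsmul_eq_mul]
  clear ht
  induction t with
  | zero => simp
  | succ n ih =>
    have key : ∑ s ∈ Finset.Icc 1 n, reward s ≥ (1 - α) * μ0 * n := ih
    have hstep : ∑ s ∈ Finset.Icc 1 (n + 1), reward s
        = (∑ s ∈ Finset.Icc 1 n, reward s) + reward (n + 1) := by
      rw [Finset.sum_Icc_succ_top (by omega : 1 ≤ n + 1)]
    rw [hstep]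
    cases hreg : regular (n + 1) with
    | true =>
      have hg := hgate (n + 1) (by omega) hreg
      simp only [Nat.add_sub_cancel] at hg
      have := hsum n
      have hr := hpos (n + 1) hreg
      push_cast
      push_cast at hg
      linarith
    | false =>
      rw [hdef (n + 1) hreg]
      have : (1 - α) * μ0 ≤ μ0 := by nlinarith
      push_cast
      nlinarith
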